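/- For every nonempty 1-code C ⊆ F^m there exists a 1-perfect code P ⊆ F^n, where n = 2^m − 1, such that C = {ι ∈ F^m : ẑι ∈ P}; in other words, every binary 1-error-correcting code of length m can be embedded in a 1-perfect code of length 2^m − 1 by fixing the last n − m coordinates to zero. -/

import Mathlib

/-- `F^m`: binary words of length `m`, i.e. the vector space `(Fin m → ZMod 2)` over GF(2). -/
abbrev Fm (m : ℕ) := Fin m → ZMod 2

/-- Index set for `F^n` with `n = 2^m - 1`: the nonzero vectors of `F^m`. -/
abbrev Idx (m : ℕ) := {v : Fm m // v ≠ 0}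

/-- `F^n`: binary words of length `n = 2^m - 1`, with coordinates indexed by
nonzero vectors of `F^m`. -/
abbrev Fn (m : ℕ) := Idx m → ZMod 2

/-- The coordinate of `c : F^n` at index `α : F^m` (junk value `0` when `α = 0`,
which is never used since coordinates are only ever accessed at nonzero indices). -/
def coord {m : ℕ} (c : Fn m) (α : Fm m) : ZMod 2 :=
  if h : α = 0 then 0 else c ⟨α, h⟩

/-- `e^(ι)`: the word of `F^n` with `1` in coordinate `ι` and `0` elsewhere. -/
def eWord {m : ℕ} (ι : Idx m) : Fn m := fun κ => if κ = ι then 1 else 0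

/-- `ẑα = (α, 0^{n-m})`: the word of `F^n` whose coordinate at index `κ` equals `α i`
if `κ = π^(i)` is the `i`-th standard basis vector `Pi.single i 1`, and `0` otherwise. -/
def zhat {m : ℕ} (α : Fm m) : Fn m :=
  fun κ => ∑ i : Fin m, if (κ : Fm m) = Pi.single i 1 then α i else 0

/-- The Hamming code `H = {c ∈ F^n : ∑_{ι ≠ 0} c_ι • ι = 0}`. -/
def hammingCode (m : ℕ) : Set (Fn m) :=
  {c | ∑ ι : Idx m, c ι • (ι : Fm m) = 0}

/-- The linear `ι`-component `R_ι = {c ∈ H : c_α = c_{α+ι} ∀ α ∉ {0, ι}}`. -/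
def Rcomp {m : ℕ} (ι : Idx m) : Set (Fn m) :=
  {c | c ∈ hammingCode m ∧
    ∀ α : Fm m, α ≠ 0 → α ≠ (ι : Fm m) → coord c α = coord c (α + ι)}

/-- The coset `M + z = {c + z : c ∈ M}`. -/
def coset {m : ℕ} (M : Set (Fn m)) (z : Fn m) : Set (Fn m) := (fun c => c + z) '' M

/-- The neighborhood `Ω(M)` of `M ⊆ F^n`: all words at Hamming distance at most 1 from `M`. -/
def nbhd {m : ℕ} (M : Set (Fn m)) : Set (Fn m) :=
  {x | ∃ c ∈ M, hammingDist x c ≤ 1}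

/-- A `1`-code: any two distinct elements are at Hamming distance at least 3. -/
def IsOneCode {ι : Type*} [Fintype ι] (C : Set (ι → ZMod 2)) : Prop :=
  ∀ x ∈ C, ∀ y ∈ C, x ≠ y → 3 ≤ hammingDist x y

/-- A `1`-perfect code in `F^n`: a `1`-code whose radius-1 balls cover all of `F^n`. -/
def IsOnePerfect {m : ℕ} (P : Set (Fn m)) : Prop :=
  IsOneCode P ∧ ∀ x : Fn m, ∃ c ∈ P, hammingDist x c ≤ 1

/-- In characteristic 2, the sum of two distinct vectors is nonzero. -/
lemma add_ne_zero_of_ne' {m : ℕ} {ι κ : Fm m} (h : ι ≠ κ) : ι + κ ≠ 0 := by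
  intro h0
  apply h
  funext i
  have h1 := congrFun h0 i
  have key : ∀ a b : ZMod 2, a + b = 0 → a = b := by decide
  exact key _ _ h1


section Prelim
variable {m : ℕ}

lemma z2_add_self : ∀ a : ZMod 2, a + a = 0 := by decide

lemma fadd_self {α : Type*} (x : α → ZMod 2) : x + x = 0 := by
  funext i; exact z2_add_self (x i)

lemma fsub_eq_fadd {α : Type*} (x y : α → ZMod 2) : x - y = x + y := by
  funext i
  show x i - y i = x i + y i
  revert i
  intro i
  generalize x i = a; generalize y i = b
  revert a b; decide

lemma hd_eq_norm (x y : Fn m) : hammingDist x y = hammingNorm (x + y) := by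
  rw [hammingDist_eq_hammingNorm, neg_add_eq_sub, fsub_eq_fadd, add_comm]

lemma hd_eq_norm' (x y : Fm m) : hammingDist x y = hammingNorm (x + y) := by
  rw [hammingDist_eq_hammingNorm, neg_add_eq_sub, fsub_eq_fadd, add_comm]

lemma wt_add_le' {α : Type*} [Fintype α] (x y : α → ZMod 2) :
    hammingNorm (x + y) ≤ hammingNorm x + hammingNorm y := by
  have h2 : hammingDist (x + y) x = hammingNorm y := by
    rw [hammingDist_eq_hammingNorm]
    congr 1
    funext i
    show -(x i + y i) + x i = y i
    generalize x i = a; generalize y i = b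
    revert a b; decide
  have h := hammingDist_triangle (x + y) x 0
  simp only [hammingDist_zero_right] at h
  rw [h2] at h
  omega

/-- syndrome -/
def synd (c : Fn m) : Fm m := ∑ ι : Idx m, c ι • (ι : Fm m)

lemma mem_hammingCode_iff {c : Fn m} : c ∈ hammingCode m ↔ synd c = 0 := Iff.rfl

lemma synd_add (x y : Fn m) : synd (x + y) = synd x + synd y := by
  unfold synd
  rw [← Finset.sum_add_distrib]
  exact Finset.sum_congr rfl fun ι _ => by
    show (x ι + y ι) • _ = _
    rw [add_smul]

lemma synd_eWord (μ : Idx m) : synd (eWord μ) = (μ : Fm m) := by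
  unfold synd eWord
  rw [Finset.sum_eq_single μ]
  · simp
  · intro b _ hb; simp [hb]
  · intro h; exact absurd (Finset.mem_univ μ) h

lemma single_ne_zero' (i : Fin m) : (Pi.single i 1 : Fm m) ≠ 0 := by
  intro h
  have := congrFun h i
  rw [Pi.single_eq_same] at this
  exact one_ne_zero this

lemma single_inj {i j : Fin m} (h : (Pi.single i 1 : Fm m) = Pi.single j 1) : i = j := by
  by_contra hne
  have := congrFun h i
  rw [Pi.single_eq_same, Pi.single_eq_of_ne hne] at this
  exact one_ne_zero this

/-- the index `π^(i)` as an element of `Idx m` -/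
def bIdx (i : Fin m) : Idx m := ⟨Pi.single i 1, single_ne_zero' i⟩

lemma synd_zhat (a : Fm m) : synd (zhat a) = a := by
  unfold synd zhat
  have : ∀ ι : Idx m, (∑ i : Fin m, if (ι : Fm m) = Pi.single i 1 then a i else 0) • (ι : Fm m)
      = ∑ i : Fin m, (if ι = bIdx i then Pi.single i (a i) else 0) := by
    intro ι
    rw [Finset.sum_smul]
    refine Finset.sum_congr rfl fun i _ => ?_
    by_cases h : (ι : Fm m) = Pi.single i 1
    · rw [if_pos h, if_pos (by exact Subtype.ext h)]
      rw [h]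
      show a i • (Pi.single i 1 : Fm m) = Pi.single i (a i)
      funext j
      by_cases hj : j = i
      · subst hj; simp
      · simp [Pi.single_eq_of_ne hj]
    · rw [if_neg h, if_neg (fun hh => h (congrArg Subtype.val hh)), zero_smul]
  rw [Finset.sum_congr rfl fun ι _ => this ι]
  rw [Finset.sum_comm]
  have : ∀ i : Fin m, (∑ ι : Idx m, if ι = bIdx i then (Pi.single i (a i) : Fm m) else 0)
      = (Pi.single i (a i) : Fm m) := by
    intro i
    rw [Finset.sum_eq_single (bIdx i)]
    · simp
    · intro b _ hb; rw [if_neg hb]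
    · intro h; exact absurd (Finset.mem_univ _) h
  rw [Finset.sum_congr rfl fun i _ => this i]
  exact Finset.univ_sum_single a

lemma z2_ne_zero {a : ZMod 2} (h : a ≠ 0) : a = 1 := by revert h; revert a; decide

/-- classification of words of weight at most 2 -/
lemma norm_le_two_cases (p : Fn m) (h : hammingNorm p ≤ 2) :
    p = 0 ∨ (∃ μ, p = eWord μ) ∨ ∃ μ ν : Idx m, μ ≠ ν ∧ p = eWord μ + eWord ν := by
  classical
  have hmem : ∀ i : Idx m, i ∈ ({i | p i ≠ 0} : Finset (Idx m)) ↔ p i ≠ 0 := by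
    intro i; simp
  have hcard : ({i | p i ≠ 0} : Finset (Idx m)).card ≤ 2 := h
  have hval : ∀ i : Idx m, p i ≠ 0 → p i = 1 := fun i hi => z2_ne_zero hi
  rcases Nat.lt_or_ge (({i | p i ≠ 0} : Finset (Idx m)).card) 1 with hc | hc
  · left
    have hc0 : ({i | p i ≠ 0} : Finset (Idx m)) = ∅ := Finset.card_eq_zero.mp (by omega)
    funext i
    by_contra hi
    have : i ∈ ({i | p i ≠ 0} : Finset (Idx m)) := (hmem i).mpr hi
    rw [hc0] at this
    exact absurd this (Finset.notMem_empty i)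
  rcases Nat.lt_or_ge (({i | p i ≠ 0} : Finset (Idx m)).card) 2 with hc2 | hc2
  · right; left
    obtain ⟨μ, hμ⟩ := Finset.card_eq_one.mp (by omega :
      ({i | p i ≠ 0} : Finset (Idx m)).card = 1)
    refine ⟨μ, funext fun κ => ?_⟩
    show p κ = if κ = μ then 1 else 0
    by_cases hκ : κ = μ
    · subst hκ
      rw [if_pos rfl]
      exact hval κ ((hmem κ).mp (by rw [hμ]; exact Finset.mem_singleton_self κ))
    · rw [if_neg hκ]
      by_contra hne
      have := (hmem κ).mpr hne
      rw [hμ] at this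
      exact hκ (Finset.mem_singleton.mp this)
  · right; right
    obtain ⟨μ, ν, hne, hμν⟩ := Finset.card_eq_two.mp (by omega :
      ({i | p i ≠ 0} : Finset (Idx m)).card = 2)
    refine ⟨μ, ν, hne, funext fun κ => ?_⟩
    show p κ = (if κ = μ then (1:ZMod 2) else 0) + (if κ = ν then 1 else 0)
    by_cases h1 : κ = μ
    · subst h1
      rw [if_pos rfl, if_neg hne, add_zero]
      exact hval κ ((hmem κ).mp (by rw [hμν]; simp))
    · by_cases h2 : κ = ν
      · subst h2
        rw [if_neg h1, if_pos rfl, zero_add]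
        exact hval κ ((hmem κ).mp (by rw [hμν]; simp))
      · rw [if_neg h1, if_neg h2, add_zero]
        by_contra hnz
        have := (hmem κ).mpr hnz
        rw [hμν] at this
        rcases Finset.mem_insert.mp this with h | h
        · exact h1 h
        · exact h2 (Finset.mem_singleton.mp h)

end Prelim

section Coord
variable {m : ℕ}

lemma add_ne_zero_of_ne'0 {ι κ : Fm m} (h : ι ≠ κ) : ι + κ ≠ 0 := by
  intro h0
  apply h
  funext i
  have h1 := congrFun h0 i
  have key : ∀ a b : ZMod 2, a + b = 0 → a = b := by decide
  exact key _ _ h1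

lemma add_cancel_iff' {a b c : Fm m} : a + c = b ↔ a = b + c := by
  constructor
  · intro h; rw [← h, add_assoc, fadd_self, add_zero]
  · intro h; rw [h, add_assoc, fadd_self, add_zero]

lemma coord_coe (c : Fn m) (ι : Idx m) : coord c (ι : Fm m) = c ι := by
  unfold coord
  rw [dif_neg ι.2]

lemma coord_add (x y : Fn m) (α : Fm m) : coord (x + y) α = coord x α + coord y α := by
  unfold coord
  split
  · rw [add_zero]
  · rfl

lemma coord_eWord {β : Fm m} (hβ : β ≠ 0) (μ : Idx m) :
    coord (eWord μ) β = if β = (μ : Fm m) then 1 else 0 := by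
  unfold coord eWord
  rw [dif_neg hβ]
  by_cases h : β = (μ : Fm m)
  · rw [if_pos (Subtype.ext h), if_pos h]
  · rw [if_neg (fun hh => h (congrArg Subtype.val hh)), if_neg h]

lemma zhat_add (a b : Fm m) : zhat (a + b) = zhat a + zhat b := by
  funext κ
  show _ = (∑ i : Fin m, if (κ : Fm m) = Pi.single i 1 then a i else 0) +
      ∑ i : Fin m, if (κ : Fm m) = Pi.single i 1 then b i else 0
  rw [← Finset.sum_add_distrib]
  refine Finset.sum_congr rfl fun i _ => ?_
  by_cases h : (κ : Fm m) = Pi.single i 1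
  · rw [if_pos h, if_pos h, if_pos h]; rfl
  · rw [if_neg h, if_neg h, if_neg h, add_zero]

lemma zhat_zero : zhat (0 : Fm m) = 0 := by
  funext κ
  show (∑ i : Fin m, if (κ : Fm m) = Pi.single i 1 then (0 : Fm m) i else 0) = 0
  refine Finset.sum_eq_zero fun i _ => ?_
  split <;> rfl

lemma coord_zhat_single (a : Fm m) (i : Fin m) :
    coord (zhat a) (Pi.single i 1) = a i := by
  unfold coord zhat
  rw [dif_neg (single_ne_zero' i)]
  show (∑ j : Fin m, if (Pi.single i 1 : Fm m) = Pi.single j 1 then a j else 0) = a i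
  rw [Finset.sum_eq_single i]
  · rw [if_pos rfl]
  · intro j _ hj
    exact if_neg (fun h => hj (single_inj h).symm)
  · intro h; exact absurd (Finset.mem_univ _) h

lemma coord_zhat_nonbasis {β : Fm m} (hβ : β ≠ 0) (h : ∀ j : Fin m, β ≠ Pi.single j 1)
    (a : Fm m) : coord (zhat a) β = 0 := by
  unfold coord zhat
  rw [dif_neg hβ]
  exact Finset.sum_eq_zero fun j _ => if_neg (h j)

lemma wt_single (i : Fin m) : hammingNorm (Pi.single i 1 : Fm m) = 1 := by
  unfold hammingNorm
  have : ({j | (Pi.single i 1 : Fm m) j ≠ 0} : Finset (Fin m)) = {i} := by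
    ext j
    simp only [Finset.mem_filter, Finset.mem_univ, true_and, Finset.mem_singleton]
    constructor
    · intro hj
      by_contra hne
      exact hj (Pi.single_eq_of_ne hne 1)
    · intro hj; subst hj
      rw [Pi.single_eq_same]
      exact one_ne_zero
  rw [this, Finset.card_singleton]

lemma norm_eWord (μ : Idx m) : hammingNorm (eWord μ) = 1 := by
  unfold hammingNorm
  have : ({κ | eWord μ κ ≠ 0} : Finset (Idx m)) = {μ} := by
    ext κ
    simp only [Finset.mem_filter, Finset.mem_univ, true_and, Finset.mem_singleton]
    simp only [eWord]
    constructor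
    · intro hκ
      by_contra hne
      rw [if_neg hne] at hκ
      exact hκ rfl
    · intro hκ; subst hκ
      rw [if_pos rfl]
      exact one_ne_zero
  rw [this, Finset.card_singleton]

lemma wt3_ne_zero {v : Fm m} (h : 3 ≤ hammingNorm v) : v ≠ 0 := by
  intro h0; rw [h0, hammingNorm_zero] at h; omega

lemma wt3_ne_single {v : Fm m} (h : 3 ≤ hammingNorm v) (i : Fin m) : v ≠ Pi.single i 1 := by
  intro h0; rw [h0, wt_single] at h; omega

lemma wt3_ne_two_singles {v : Fm m} (h : 3 ≤ hammingNorm v) (i j : Fin m) :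
    v ≠ Pi.single i 1 + Pi.single j 1 := by
  intro h0
  have := wt_add_le' (Pi.single i 1 : Fm m) (Pi.single j 1)
  rw [← h0, wt_single, wt_single] at this
  omega

lemma exists_one_of_ne_zero {v : Fm m} (h : v ≠ 0) : ∃ i, v i ≠ 0 := by
  by_contra hc
  push_neg at hc
  exact h (funext fun i => hc i)

end Coord

section RcompLemmas
variable {m : ℕ}

lemma nsmul2 (a : Fn m) : (2 : ℕ) • a = 0 := by
  rw [two_smul]; exact fadd_self a

lemma zero_mem_H : (0 : Fn m) ∈ hammingCode m := by
  show ∑ ι : Idx m, (0 : Fn m) ι • (ι : Fm m) = 0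
  exact Finset.sum_eq_zero fun ι _ => by rw [show (0 : Fn m) ι = 0 from rfl, zero_smul]

lemma H_add {x y : Fn m} (hx : x ∈ hammingCode m) (hy : y ∈ hammingCode m) :
    x + y ∈ hammingCode m := by
  rw [mem_hammingCode_iff] at *
  rw [synd_add, hx, hy, add_zero]

lemma zero_mem_Rcomp (ι : Idx m) : (0 : Fn m) ∈ Rcomp ι := by
  refine ⟨zero_mem_H, fun α h1 h2 => ?_⟩
  unfold coord
  split <;> split <;> rfl

lemma Rcomp_add {x y : Fn m} {ι : Idx m} (hx : x ∈ Rcomp ι) (hy : y ∈ Rcomp ι) :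
    x + y ∈ Rcomp ι := by
  refine ⟨H_add hx.1 hy.1, fun α h1 h2 => ?_⟩
  rw [coord_add, coord_add, hx.2 α h1 h2, hy.2 α h1 h2]

lemma triple_mem {ι μ : Idx m} (hne : (μ : Fm m) ≠ (ι : Fm m)) :
    eWord ι + eWord μ + eWord ⟨(μ : Fm m) + (ι : Fm m), add_ne_zero_of_ne'0 hne⟩ ∈ Rcomp ι := by
  constructor
  · rw [mem_hammingCode_iff, synd_add, synd_add, synd_eWord, synd_eWord, synd_eWord]
    show (ι : Fm m) + (μ : Fm m) + ((μ : Fm m) + (ι : Fm m)) = 0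
    have : (ι : Fm m) + (μ : Fm m) + ((μ : Fm m) + (ι : Fm m))
        = ((ι : Fm m) + (ι : Fm m)) + ((μ : Fm m) + (μ : Fm m)) := by ring
    rw [this, fadd_self, fadd_self, add_zero]
  · intro α hα0 hαι
    have hαι0 : α + (ι : Fm m) ≠ 0 := add_ne_zero_of_ne'0 hαι
    rw [coord_add, coord_add, coord_add, coord_add,
      coord_eWord hα0, coord_eWord hα0, coord_eWord hα0,
      coord_eWord hαι0, coord_eWord hαι0, coord_eWord hαι0]
    rw [if_neg hαι]
    rw [if_neg (show ¬ α + (ι : Fm m) = (ι : Fm m) by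
      intro h; exact hα0 (by rwa [add_cancel_iff', fadd_self] at h))]
    have e1 : (α + (ι : Fm m) = (μ : Fm m)) = (α = (μ : Fm m) + (ι : Fm m)) :=
      propext add_cancel_iff'
    have e2 : (α + (ι : Fm m) = (μ : Fm m) + (ι : Fm m)) = (α = (μ : Fm m)) := by
      refine propext ⟨fun h => ?_, fun h => by rw [h]⟩
      rwa [add_cancel_iff', add_assoc, fadd_self, add_zero] at h
    have e3 : ((⟨(μ : Fm m) + (ι : Fm m), add_ne_zero_of_ne'0 hne⟩ : Idx m) : Fm m)
        = (μ : Fm m) + (ι : Fm m) := rfl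
    simp only [e3, e1, e2]
    ring

/-- Minimum weight 3 for the Hamming code. -/
lemma H_min_wt {q : Fn m} (hq : q ∈ hammingCode m) (hq0 : q ≠ 0) : 3 ≤ hammingNorm q := by
  by_contra hlt
  rcases norm_le_two_cases q (by omega) with h | ⟨μ, h⟩ | ⟨μ, ν, hne, h⟩
  · exact hq0 h
  · rw [mem_hammingCode_iff, h, synd_eWord] at hq
    exact μ.2 hq
  · rw [mem_hammingCode_iff, h, synd_add, synd_eWord, synd_eWord] at hq
    exact add_ne_zero_of_ne'0 (Subtype.coe_injective.ne hne) hq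

/-- The Hamming code is a covering code. -/
lemma H_cover (x : Fn m) : ∃ c ∈ hammingCode m, hammingDist x c ≤ 1 := by
  by_cases h : synd x = 0
  · exact ⟨x, h, by simp [hammingDist_self]⟩
  · refine ⟨x + eWord ⟨synd x, h⟩, ?_, ?_⟩
    · rw [mem_hammingCode_iff, synd_add, synd_eWord]
      exact fadd_self _
    · rw [hd_eq_norm]
      have : x + (x + eWord ⟨synd x, h⟩) = eWord ⟨synd x, h⟩ := by
        rw [← add_assoc, fadd_self, zero_add]
      rw [this, norm_eWord]

/-- the `ι`-component through `ẑι + e^ι`, i.e. the part of `H` that gets switched -/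
def Kcomp (ι : Idx m) : Set (Fn m) := coset (Rcomp ι) (zhat (ι : Fm m) + eWord ι)

/-- the switched (translated) component -/
def Kcomp' (ι : Idx m) : Set (Fn m) := coset (Rcomp ι) (zhat (ι : Fm m))

lemma mem_coset_iff {M : Set (Fn m)} {z x : Fn m} : x ∈ coset M z ↔ x + z ∈ M := by
  constructor
  · rintro ⟨c, hc, rfl⟩
    rwa [add_assoc, fadd_self, add_zero]
  · intro h
    exact ⟨x + z, h, by show x + z + z = x; rw [add_assoc, fadd_self, add_zero]⟩

lemma Kcomp_subset_H {ι : Idx m} : Kcomp ι ⊆ hammingCode m := by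
  intro x hx
  rw [Kcomp, mem_coset_iff] at hx
  have h1 := hx.1
  have h2 : x + (zhat (ι : Fm m) + eWord ι) + (zhat (ι : Fm m) + eWord ι) = x := by
    rw [add_assoc, fadd_self, add_zero]
  rw [mem_hammingCode_iff] at h1 ⊢
  rw [← h2, synd_add, h1, zero_add, synd_add, synd_zhat, synd_eWord, fadd_self]

lemma small_dist_mem_Rcomp {q : Fn m} (hq : q ∈ hammingCode m) (ι : Idx m)
    (h : hammingNorm (q + eWord ι) ≤ 2) : q ∈ Rcomp ι := by
  have hqe : q = (q + eWord ι) + eWord ι := by rw [add_assoc, fadd_self, add_zero]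
  rcases norm_le_two_cases _ h with h0 | ⟨μ, he⟩ | ⟨μ, ν, hne, he⟩
  · rw [h0, zero_add] at hqe
    rw [mem_hammingCode_iff, hqe, synd_eWord] at hq
    exact absurd hq ι.2
  · have hμι : μ = ι := by
      have := hq
      rw [mem_hammingCode_iff, hqe, he, synd_add, synd_eWord, synd_eWord] at this
      exact Subtype.ext (by
        have : (μ : Fm m) = (ι : Fm m) := by
          have h2 := add_cancel_iff'.mp this
          rwa [zero_add] at h2
        exact this)
    rw [hqe, he, hμι, fadd_self]
    exact zero_mem_Rcomp ι
  · have hsum : (μ : Fm m) + (ν : Fm m) = (ι : Fm m) := by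
      have := hq
      rw [mem_hammingCode_iff, hqe, he, synd_add, synd_add, synd_eWord, synd_eWord,
        synd_eWord] at this
      have h2 := add_cancel_iff'.mp this
      rwa [zero_add] at h2
    have hμι : (μ : Fm m) ≠ (ι : Fm m) := by
      intro hh
      rw [hh] at hsum
      have hν0 : (ν : Fm m) = 0 := by
        have h2 : (ι : Fm m) + ((ι : Fm m) + (ν : Fm m)) = (ν : Fm m) := by
          rw [← add_assoc, fadd_self, zero_add]
        rw [← h2, hsum]
        exact fadd_self _
      exact ν.2 hν0
    have hν : ν = ⟨(μ : Fm m) + (ι : Fm m), add_ne_zero_of_ne'0 hμι⟩ := by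
      apply Subtype.ext
      show (ν : Fm m) = (μ : Fm m) + (ι : Fm m)
      rw [← hsum]
      have : (μ : Fm m) + ((μ : Fm m) + (ν : Fm m)) = (ν : Fm m) := by
        rw [← add_assoc, fadd_self, zero_add]
      rw [this]
    have : q = eWord ι + eWord μ + eWord ⟨(μ : Fm m) + (ι : Fm m), add_ne_zero_of_ne'0 hμι⟩ := by
      rw [hqe, he, hν]
      ring
    rw [this]
    exact triple_mem hμι

/-- A word of the switched component at distance ≤ 2 from a Hamming codeword
forces that codeword to lie in the unswitched component. -/
lemma switched_far_from_H {s h : Fn m} {ι : Idx m} (hs : s ∈ Kcomp' ι)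
    (hh : h ∈ hammingCode m) (hd : hammingDist s h ≤ 2) : h ∈ Kcomp ι := by
  rw [Kcomp', mem_coset_iff] at hs
  have hsK : s + eWord ι ∈ Kcomp ι := by
    rw [Kcomp, mem_coset_iff]
    have : s + eWord ι + (zhat (ι : Fm m) + eWord ι) = s + zhat (ι : Fm m) := by
      have h2 : s + eWord ι + (zhat (ι : Fm m) + eWord ι)
          = s + zhat (ι : Fm m) + (eWord ι + eWord ι) := by ring
      rw [h2, fadd_self, add_zero]
    rw [this]
    exact hs
  have hq : s + eWord ι + h ∈ hammingCode m := H_add (Kcomp_subset_H hsK) hh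
  have hqR : s + eWord ι + h ∈ Rcomp ι := by
    apply small_dist_mem_Rcomp hq ι
    have : s + eWord ι + h + eWord ι = s + h := by
      have h2 : s + eWord ι + h + eWord ι = s + h + (eWord ι + eWord ι) := by ring
      rw [h2, fadd_self, add_zero]
    rw [this, ← hd_eq_norm]
    exact hd
  rw [Kcomp, mem_coset_iff]
  have : h + (zhat (ι : Fm m) + eWord ι) = (s + zhat (ι : Fm m)) + (s + eWord ι + h) := by
    have h2 : (s + zhat (ι : Fm m)) + (s + eWord ι + h)
        = h + (zhat (ι : Fm m) + eWord ι) + (s + s) := by ring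
    rw [h2, fadd_self, add_zero]
  rw [this]
  exact Rcomp_add hs hqR

lemma norm_two_eWords {μ ν : Idx m} (hne : μ ≠ ν) :
    hammingNorm (eWord μ + eWord ν) = 2 := by
  unfold hammingNorm
  have : ({κ | (eWord μ + eWord ν) κ ≠ 0} : Finset (Idx m)) = {μ, ν} := by
    ext κ
    simp only [Finset.mem_filter, Finset.mem_univ, true_and, Finset.mem_insert,
      Finset.mem_singleton]
    have hval : (eWord μ + eWord ν) κ
        = (if κ = μ then (1 : ZMod 2) else 0) + (if κ = ν then 1 else 0) := rfl
    constructor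
    · intro hκ
      by_contra hc
      push_neg at hc
      rw [hval, if_neg hc.1, if_neg hc.2, add_zero] at hκ
      exact hκ rfl
    · intro hκ
      rcases hκ with h | h
      · subst h
        rw [hval, if_pos rfl, if_neg hne, add_zero]
        exact one_ne_zero
      · subst h
        rw [hval, if_neg (fun hh => hne hh.symm), if_pos rfl, zero_add]
        exact one_ne_zero
  rw [this, Finset.card_insert_of_notMem (by simp [hne]), Finset.card_singleton]

/-- Anything covered by the unswitched component is covered by the switched component. -/
lemma cover_switch {y x : Fn m} {ι : Idx m} (hx : x ∈ Kcomp ι)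
    (hd : hammingDist y x ≤ 1) : ∃ s ∈ Kcomp' ι, hammingDist y s ≤ 1 := by
  have hxK' : x + eWord ι ∈ Kcomp' ι := by
    rw [Kcomp', mem_coset_iff]
    rw [Kcomp, mem_coset_iff] at hx
    have : x + eWord ι + zhat (ι : Fm m) = x + (zhat (ι : Fm m) + eWord ι) := by ring
    rw [this]
    exact hx
  rw [hd_eq_norm] at hd
  rcases norm_le_two_cases (y + x) (by omega) with h0 | ⟨μ, he⟩ | ⟨μ, ν, hne, he⟩
  rotate_right
  · exfalso
    rw [he, norm_two_eWords hne] at hd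
    omega
  · -- y = x
    have hyx : y = x := by
      have : y + x + x = 0 + x := by rw [h0]
      rwa [add_assoc, fadd_self, add_zero, zero_add] at this
    refine ⟨x + eWord ι, hxK', ?_⟩
    rw [hyx, hd_eq_norm]
    have : x + (x + eWord ι) = eWord ι := by rw [← add_assoc, fadd_self, zero_add]
    rw [this, norm_eWord]
  · -- y = x + eWord μ
    have hyx : y = x + eWord μ := by
      have : y + x + x = eWord μ + x := by rw [he]
      rw [add_assoc, fadd_self, add_zero] at this
      rw [this]; ring
    by_cases hμι : μ = ι
    · subst hμι
      exact ⟨x + eWord μ, hxK', by rw [hyx, hammingDist_self]; exact Nat.zero_le 1⟩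
    · have hμιv : (μ : Fm m) ≠ (ι : Fm m) := Subtype.coe_injective.ne hμι
      set T := eWord ι + eWord μ + eWord ⟨(μ : Fm m) + (ι : Fm m), add_ne_zero_of_ne'0 hμιv⟩
        with hT
      have hTR : T ∈ Rcomp ι := triple_mem hμιv
      have hxT : x + T ∈ Kcomp ι := by
        rw [Kcomp, mem_coset_iff] at hx ⊢
        have : x + T + (zhat (ι : Fm m) + eWord ι)
            = (x + (zhat (ι : Fm m) + eWord ι)) + T := by ring
        rw [this]
        exact Rcomp_add hx hTR
      have hsK' : x + T + eWord ι ∈ Kcomp' ι := by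
        rw [Kcomp', mem_coset_iff]
        rw [Kcomp, mem_coset_iff] at hxT
        have : x + T + eWord ι + zhat (ι : Fm m) = x + T + (zhat (ι : Fm m) + eWord ι) := by
          ring
        rw [this]
        exact hxT
      refine ⟨x + T + eWord ι, hsK', ?_⟩
      rw [hyx, hd_eq_norm, hT]
      have h9 : x + eWord μ + (x + (eWord ι + eWord μ +
          eWord ⟨(μ : Fm m) + (ι : Fm m), add_ne_zero_of_ne'0 hμιv⟩) + eWord ι)
          = eWord ⟨(μ : Fm m) + (ι : Fm m), add_ne_zero_of_ne'0 hμιv⟩ + ((x + x) +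
            (eWord μ + eWord μ) + (eWord ι + eWord ι)) := by ring
      rw [h9, fadd_self x, fadd_self (eWord μ), fadd_self (eWord ι)]
      simp [norm_eWord]

end RcompLemmas

section Core
variable {m : ℕ}

lemma hd_eq_normg {α : Type*} [Fintype α] (x y : α → ZMod 2) :
    hammingDist x y = hammingNorm (x + y) := by
  rw [hammingDist_eq_hammingNorm, neg_add_eq_sub, fsub_eq_fadd, add_comm]

lemma hd_add_right {α : Type*} [Fintype α] (x y z : α → ZMod 2) :
    hammingDist (x + z) (y + z) = hammingDist x y := by
  rw [hd_eq_normg, hd_eq_normg]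
  congr 1
  have h : (x + z) + (y + z) = (x + y) + (z + z) := by ring
  rw [h, fadd_self, add_zero]

lemma zhat_mem_Kcomp' (ι : Idx m) : zhat (ι : Fm m) ∈ Kcomp' ι := by
  rw [Kcomp', mem_coset_iff, fadd_self]
  exact zero_mem_Rcomp ι

lemma zhat_not_mem_Kcomp' {a : Fm m} {ι : Idx m} (hne : a ≠ (ι : Fm m)) :
    zhat a ∉ Kcomp' ι := by
  intro h
  rw [Kcomp', mem_coset_iff, ← zhat_add] at h
  have hH := h.1
  rw [mem_hammingCode_iff, synd_zhat] at hH
  exact add_ne_zero_of_ne'0 hne hH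

lemma zhat_not_mem_H {a : Fm m} (ha : a ≠ 0) : zhat a ∉ hammingCode m := by
  intro h
  rw [mem_hammingCode_iff, synd_zhat] at h
  exact ha h

lemma zero_not_mem_Kcomp {ι : Idx m} (h3 : 3 ≤ hammingNorm (ι : Fm m)) :
    (0 : Fn m) ∉ Kcomp ι := by
  intro h
  rw [Kcomp, mem_coset_iff, zero_add] at h
  obtain ⟨i, hi⟩ := exists_one_of_ne_zero (wt3_ne_zero h3)
  have hα0 : (Pi.single i 1 : Fm m) ≠ 0 := single_ne_zero' i
  have hαι : (Pi.single i 1 : Fm m) ≠ (ι : Fm m) := fun hh => wt3_ne_single h3 i hh.symm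
  have hpair := h.2 (Pi.single i 1) hα0 hαι
  rw [coord_add, coord_add, coord_zhat_single, coord_eWord hα0,
    coord_eWord (add_ne_zero_of_ne'0 hαι),
    coord_zhat_nonbasis (add_ne_zero_of_ne'0 hαι) (fun j hj => by
      have h2 : (ι : Fm m) + (Pi.single i 1 : Fm m) = Pi.single j 1 := by
        rw [add_comm]; exact hj
      have h3' := add_cancel_iff'.mp h2
      exact wt3_ne_two_singles h3 j i (by rw [h3', add_comm])) (ι : Fm m)] at hpair
  rw [if_neg hαι, if_neg (show ¬ (Pi.single i 1 : Fm m) + (ι : Fm m) = (ι : Fm m) by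
    intro hh
    have := add_cancel_iff'.mp hh
    rw [fadd_self] at this
    exact hα0 this), add_zero, zero_add] at hpair
  rw [z2_ne_zero hi] at hpair
  exact one_ne_zero hpair

lemma switched_same_far {ι : Idx m} {s s' : Fn m} (hs : s ∈ Kcomp' ι)
    (hs' : s' ∈ Kcomp' ι) (hne : s ≠ s') : 3 ≤ hammingDist s s' := by
  rw [Kcomp', mem_coset_iff] at hs hs'
  have hmem : s + s' ∈ Rcomp ι := by
    have h9 : (s + zhat (ι : Fm m)) + (s' + zhat (ι : Fm m))
        = (s + s') + (zhat (ι : Fm m) + zhat (ι : Fm m)) := by ring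
    rw [fadd_self, add_zero] at h9
    rw [← h9]
    exact Rcomp_add hs hs'
  have hne0 : s + s' ≠ 0 := by
    intro h0
    apply hne
    have : s + s' + s' = 0 + s' := by rw [h0]
    rwa [add_assoc, fadd_self, add_zero, zero_add] at this
  rw [hd_eq_norm]
  exact H_min_wt hmem.1 hne0

/-- Distinct switched components are at distance ≥ 3 from each other. -/
lemma switched_switched_far {ι κ : Idx m} (hne : ι ≠ κ)
    (h3ι : 3 ≤ hammingNorm (ι : Fm m)) (h3κ : 3 ≤ hammingNorm (κ : Fm m))
    (h3ε : 3 ≤ hammingNorm ((ι : Fm m) + (κ : Fm m)))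
    {s s' : Fn m} (hs : s ∈ Kcomp' ι) (hs' : s' ∈ Kcomp' κ) :
    3 ≤ hammingDist s s' := by
  by_contra hlt
  push_neg at hlt
  rw [hd_eq_norm] at hlt
  obtain ⟨w, hw⟩ : ∃ w : Fn m, w = s + s' := ⟨_, rfl⟩
  rw [← hw] at hlt
  set ε := (ι : Fm m) + (κ : Fm m) with hε
  obtain ⟨i, hi⟩ := exists_one_of_ne_zero (wt3_ne_zero h3ε)
  set α := (Pi.single i 1 : Fm m) with hα
  have hα0 : α ≠ 0 := single_ne_zero' i
  have hαι : α ≠ (ι : Fm m) := fun hh => wt3_ne_single h3ι i hh.symm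
  have hακ : α ≠ (κ : Fm m) := fun hh => wt3_ne_single h3κ i hh.symm
  have hαε : α ≠ ε := fun hh => wt3_ne_single h3ε i hh.symm
  have hαι0 : α + (ι : Fm m) ≠ 0 := add_ne_zero_of_ne'0 hαι
  have hακ0 : α + (κ : Fm m) ≠ 0 := add_ne_zero_of_ne'0 hακ
  have hαε0 : α + ε ≠ 0 := add_ne_zero_of_ne'0 hαε
  have eειk : ε + (ι : Fm m) = (κ : Fm m) := by
    rw [hε]
    have h9 : ((ι : Fm m) + (κ : Fm m)) + (ι : Fm m)
        = (κ : Fm m) + ((ι : Fm m) + (ι : Fm m)) := by ring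
    rw [h9, fadd_self, add_zero]
  have eεκι : ε + (κ : Fm m) = (ι : Fm m) := by
    rw [hε]
    have h9 : ((ι : Fm m) + (κ : Fm m)) + (κ : Fm m)
        = (ι : Fm m) + ((κ : Fm m) + (κ : Fm m)) := by ring
    rw [h9, fadd_self, add_zero]
  have hαικ : α + (ι : Fm m) ≠ (κ : Fm m) := by
    intro hh
    have h9 := add_cancel_iff'.mp hh
    rw [add_comm (κ : Fm m) (ι : Fm m), ← hε] at h9
    exact hαε h9
  have hακι : α + (κ : Fm m) ≠ (ι : Fm m) := by
    intro hh
    have h9 := add_cancel_iff'.mp hh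
    rw [← hε] at h9
    exact hαε h9
  have hαιε : α + (ι : Fm m) ≠ ε := by
    intro hh
    have h9 := add_cancel_iff'.mp hh
    rw [eειk] at h9
    exact hακ h9
  have hακε : α + (κ : Fm m) ≠ ε := by
    intro hh
    have h9 := add_cancel_iff'.mp hh
    rw [eεκι] at h9
    exact hαι h9
  have hαεε : α + ε ≠ ε := by
    intro hh
    have h9 := add_cancel_iff'.mp hh
    rw [fadd_self] at h9
    exact hα0 h9
  -- the nonbasis facts
  have nbι : ∀ j : Fin m, α + (ι : Fm m) ≠ Pi.single j 1 := by
    intro j hj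
    have h2 : (ι : Fm m) + α = Pi.single j 1 := by rw [add_comm]; exact hj
    have h3' := add_cancel_iff'.mp h2
    exact wt3_ne_two_singles h3ι j i (by rw [h3', hα])
  have nbκ : ∀ j : Fin m, α + (κ : Fm m) ≠ Pi.single j 1 := by
    intro j hj
    have h2 : (κ : Fm m) + α = Pi.single j 1 := by rw [add_comm]; exact hj
    have h3' := add_cancel_iff'.mp h2
    exact wt3_ne_two_singles h3κ j i (by rw [h3', hα])
  have nbε : ∀ j : Fin m, α + ε ≠ Pi.single j 1 := by
    intro j hj
    have h2 : ε + α = Pi.single j 1 := by rw [add_comm]; exact hj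
    have h3' := add_cancel_iff'.mp h2
    exact wt3_ne_two_singles h3ε j i (by rw [h3', hα])
  -- memberships
  rw [Kcomp', mem_coset_iff] at hs hs'
  set r := s + zhat (ι : Fm m) with hr
  set r' := s' + zhat (κ : Fm m) with hr'
  -- claim the sum over the four points is 0
  have p1 : coord r α = coord r (α + (ι : Fm m)) := hs.2 α hα0 hαι
  have p2 : coord r (α + (κ : Fm m)) = coord r (α + (κ : Fm m) + (ι : Fm m)) :=
    hs.2 (α + (κ : Fm m)) hακ0 hακι
  have p3 : coord r' α = coord r' (α + (κ : Fm m)) := hs'.2 α hα0 hακ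
  have p4 : coord r' (α + (ι : Fm m)) = coord r' (α + (ι : Fm m) + (κ : Fm m)) :=
    hs'.2 (α + (ι : Fm m)) hαι0 hαικ
  have e4 : α + (κ : Fm m) + (ι : Fm m) = α + ε := by rw [hε]; ring
  have e5 : α + (ι : Fm m) + (κ : Fm m) = α + ε := by rw [hε]; ring
  have key2 : ∀ a b : ZMod 2, (a + b) + (b + a) = 0 := by decide
  have hS0 : coord (r + r') α + coord (r + r') (α + (ι : Fm m))
      + coord (r + r') (α + (κ : Fm m)) + coord (r + r') (α + ε) = 0 := by
    have hsplit : coord (r + r') α + coord (r + r') (α + (ι : Fm m))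
        + coord (r + r') (α + (κ : Fm m)) + coord (r + r') (α + ε)
        = ((coord r α + coord r (α + (ι : Fm m)))
          + (coord r (α + (κ : Fm m)) + coord r (α + ε)))
          + ((coord r' α + coord r' (α + (κ : Fm m)))
          + (coord r' (α + (ι : Fm m)) + coord r' (α + ε))) := by
      simp only [coord_add]; ring
    have p2' : coord r (α + (κ : Fm m)) = coord r (α + ε) := by rw [p2, e4]
    have p4' : coord r' (α + (ι : Fm m)) = coord r' (α + ε) := by rw [p4, e5]
    rw [hsplit, p1, p2', p3, p4']
    simp only [z2_add_self, add_zero, zero_add]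
  -- now compute it as 1
  have hq_eq : r + r' = w + zhat ε := by
    rw [hw, hε, zhat_add, hr, hr']
    ring
  have hsynd : synd w = ε := by
    have h1 : synd (r + r') = 0 := by
      have hr0 : synd r = 0 := hs.1
      have hr'0 : synd r' = 0 := hs'.1
      rw [synd_add, hr0, hr'0, add_zero]
    rw [hq_eq, synd_add, synd_zhat] at h1
    have h2 : synd w + ε + ε = 0 + ε := by rw [h1]
    rwa [add_assoc, fadd_self, add_zero, zero_add] at h2
  have hz1 : coord (zhat ε) α = 1 := by
    rw [hα, coord_zhat_single]
    exact z2_ne_zero hi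
  have hz2 : coord (zhat ε) (α + (ι : Fm m)) = 0 := coord_zhat_nonbasis hαι0 nbι ε
  have hz3 : coord (zhat ε) (α + (κ : Fm m)) = 0 := coord_zhat_nonbasis hακ0 nbκ ε
  have hz4 : coord (zhat ε) (α + ε) = 0 := coord_zhat_nonbasis hαε0 nbε ε
  have hP : coord w α + coord w (α + (ι : Fm m))
      + coord w (α + (κ : Fm m)) + coord w (α + ε) = 0 := by
    rcases norm_le_two_cases w (by omega) with h0 | ⟨μ, he⟩ | ⟨μ, ν, hμν, he⟩
    · rw [h0] at hsynd
      have hz : synd (0 : Fn m) = 0 := zero_mem_H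
      rw [hz] at hsynd
      exact absurd hsynd.symm (wt3_ne_zero h3ε)
    · have hμε : (μ : Fm m) = ε := by rw [he, synd_eWord] at hsynd; exact hsynd
      rw [he]
      rw [coord_eWord hα0, coord_eWord hαι0, coord_eWord hακ0, coord_eWord hαε0, hμε]
      rw [if_neg hαε, if_neg hαιε, if_neg hακε, if_neg hαεε]
      simp
    · have hsum : (μ : Fm m) + (ν : Fm m) = ε := by
        rw [he, synd_add, synd_eWord, synd_eWord] at hsynd; exact hsynd
      have hν : (ν : Fm m) = (μ : Fm m) + ε := by
        rw [← hsum, ← add_assoc, fadd_self, zero_add]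
      have subcl : ∀ β : Fm m, β ≠ 0 → β + ε ≠ 0 →
          coord w β + coord w (β + ε) = 0 := by
        intro β hβ0 hβε0
        have q1 : (β + ε = (μ : Fm m)) = (β = (ν : Fm m)) := by
          refine propext ?_
          rw [add_cancel_iff', ← hν]
        have q2 : (β + ε = (ν : Fm m)) = (β = (μ : Fm m)) := by
          refine propext ?_
          rw [add_cancel_iff', hν, add_assoc, fadd_self, add_zero]
        rw [he, coord_add, coord_add, coord_eWord hβ0, coord_eWord hβ0,
          coord_eWord hβε0, coord_eWord hβε0]
        simp only [q1, q2]
        exact key2 _ _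
      have b5 := subcl α hα0 hαε0
      have e6 : α + (ι : Fm m) + ε = α + (κ : Fm m) := by
        rw [add_assoc, add_comm (ι : Fm m) ε, eειk]
      have b6 := subcl (α + (ι : Fm m)) hαι0 (by rw [e6]; exact hακ0)
      rw [e6] at b6
      have hsplit2 : coord w α + coord w (α + (ι : Fm m))
          + coord w (α + (κ : Fm m)) + coord w (α + ε)
          = (coord w α + coord w (α + ε))
            + (coord w (α + (ι : Fm m)) + coord w (α + (κ : Fm m))) := by
        ring
      rw [hsplit2, b5, b6, add_zero]
  have hS1 : coord (r + r') α + coord (r + r') (α + (ι : Fm m))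
      + coord (r + r') (α + (κ : Fm m)) + coord (r + r') (α + ε) = 1 := by
    rw [hq_eq]
    simp only [coord_add]
    rw [hz1, hz2, hz3, hz4]
    linear_combination hP
  rw [hS0] at hS1
  exact absurd hS1 (by decide)

end Core

/-- The main construction, for codes containing `0`. -/
theorem main0 {m : ℕ} (C : Set (Fm m)) (h0 : (0 : Fm m) ∈ C) (hC : IsOneCode C) :
    ∃ P : Set (Fn m), IsOnePerfect P ∧ C = {a : Fm m | zhat a ∈ P} := by
  classical
  set D : Set (Idx m) := {ι : Idx m | (ι : Fm m) ∈ C} with hD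
  have hw3 : ∀ ι ∈ D, 3 ≤ hammingNorm (ι : Fm m) := by
    intro ι hι
    have h := hC 0 h0 (ι : Fm m) hι (fun h => ι.2 h.symm)
    rwa [show hammingDist (0 : Fm m) (ι : Fm m) = hammingNorm (ι : Fm m) from by
      rw [hammingDist_comm, hammingDist_zero_right]] at h
  have hw3' : ∀ ι ∈ D, ∀ κ ∈ D, ι ≠ κ → 3 ≤ hammingNorm ((ι : Fm m) + (κ : Fm m)) := by
    intro ι hι κ hκ hne
    have h := hC (ι : Fm m) hι (κ : Fm m) hκ (Subtype.coe_injective.ne hne)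
    rwa [hd_eq_normg] at h
  refine ⟨(hammingCode m \ ⋃ ι ∈ D, Kcomp ι) ∪ ⋃ ι ∈ D, Kcomp' ι, ⟨?_, ?_⟩, ?_⟩
  · -- 1-code
    have mixed : ∀ x y : Fn m, x ∈ hammingCode m → x ∉ (⋃ ι ∈ D, Kcomp ι) →
        y ∈ (⋃ ι ∈ D, Kcomp' ι) → 3 ≤ hammingDist x y := by
      intro x y hxH hxU hyU
      obtain ⟨ι, hιD, hyK⟩ := Set.mem_iUnion₂.mp hyU
      by_contra hlt
      push_neg at hlt
      have : x ∈ Kcomp ι := switched_far_from_H hyK hxH (by rw [hammingDist_comm]; omega)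
      exact hxU (Set.mem_iUnion₂.mpr ⟨ι, hιD, this⟩)
    intro x hx y hy hne
    rcases hx with ⟨hxH, hxU⟩ | hxU
    · rcases hy with ⟨hyH, hyU⟩ | hyU
      · have hne0 : x + y ≠ 0 := by
          intro h
          apply hne
          have : x + y + y = 0 + y := by rw [h]
          rwa [add_assoc, fadd_self, add_zero, zero_add] at this
        rw [hd_eq_norm]
        exact H_min_wt (H_add hxH hyH) hne0
      · exact mixed x y hxH hxU hyU
    · rcases hy with ⟨hyH, hyU⟩ | hyU
      · rw [hammingDist_comm]
        exact mixed y x hyH hyU hxU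
      · obtain ⟨ι, hιD, hxK⟩ := Set.mem_iUnion₂.mp hxU
        obtain ⟨κ, hκD, hyK⟩ := Set.mem_iUnion₂.mp hyU
        by_cases hιeκ : ι = κ
        · subst hιeκ
          exact switched_same_far hxK hyK hne
        · exact switched_switched_far hιeκ (hw3 ι hιD) (hw3 κ hκD)
            (hw3' ι hιD κ hκD hιeκ) hxK hyK
  · -- covering
    intro x
    obtain ⟨c, hcH, hcd⟩ := H_cover x
    by_cases hcU : c ∈ ⋃ ι ∈ D, Kcomp ι
    · obtain ⟨ι, hιD, hcK⟩ := Set.mem_iUnion₂.mp hcU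
      obtain ⟨sw, hswK', hswd⟩ := cover_switch hcK hcd
      exact ⟨sw, Or.inr (Set.mem_iUnion₂.mpr ⟨ι, hιD, hswK'⟩), hswd⟩
    · exact ⟨c, Or.inl ⟨hcH, hcU⟩, hcd⟩
  · -- the embedding equality
    ext a
    simp only [Set.mem_setOf_eq]
    constructor
    · intro ha
      by_cases ha0 : a = 0
      · subst ha0
        rw [zhat_zero]
        left
        refine ⟨zero_mem_H, ?_⟩
        intro hcontra
        obtain ⟨ι, hιD, h0K⟩ := Set.mem_iUnion₂.mp hcontra
        exact zero_not_mem_Kcomp (hw3 ι hιD) h0K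
      · right
        exact Set.mem_iUnion₂.mpr ⟨⟨a, ha0⟩, ha, zhat_mem_Kcomp' ⟨a, ha0⟩⟩
    · intro h
      rcases h with ⟨hH, _⟩ | hU'
      · have ha0 : a = 0 := by
          by_contra ha
          exact (zhat_not_mem_H ha) hH
        rw [ha0]
        exact h0
      · obtain ⟨ι, hιD, hK'⟩ := Set.mem_iUnion₂.mp hU'
        have haι : a = (ι : Fm m) := by
          by_contra hne
          exact zhat_not_mem_Kcomp' hne hK'
        rw [haι]
        exact hιD

/-- Every nonempty 1-code `C ⊆ F^m` can be embedded in a 1-perfect code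
`P ⊆ F^n`, `n = 2^m - 1`: there is a 1-perfect `P` with `C = {ι ∈ F^m : ẑι ∈ P}`. -/
theorem stmt13 (m : ℕ) (hm : 1 ≤ m) (C : Set (Fm m)) (hC : IsOneCode C)
    (hne : C.Nonempty) :
    ∃ P : Set (Fn m), IsOnePerfect P ∧ C = {ι : Fm m | zhat ι ∈ P} := by
  classical
  obtain ⟨γ₀, hγ₀⟩ := hne
  set C₂ : Set (Fm m) := (fun x => x + γ₀) '' C with hC₂
  have hC2mem : ∀ b, b ∈ C₂ ↔ b + γ₀ ∈ C := by
    intro b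
    constructor
    · rintro ⟨c, hc, rfl⟩
      rwa [add_assoc, fadd_self, add_zero]
    · intro h
      exact ⟨b + γ₀, h, by show b + γ₀ + γ₀ = b; rw [add_assoc, fadd_self, add_zero]⟩
  have h02 : (0 : Fm m) ∈ C₂ := by
    rw [hC2mem, zero_add]
    exact hγ₀
  have hC2code : IsOneCode C₂ := by
    rintro x ⟨cx, hcx, rfl⟩ y ⟨cy, hcy, rfl⟩ hnexy
    rw [hd_add_right]
    exact hC cx hcx cy hcy (fun h => hnexy (by rw [h]))
  obtain ⟨P₂, hP₂perf, hP₂eq⟩ := main0 C₂ h02 hC2code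
  refine ⟨coset P₂ (zhat γ₀), ⟨?_, ?_⟩, ?_⟩
  · intro x hx y hy hnexy
    rw [mem_coset_iff] at hx hy
    have h := hP₂perf.1 _ hx _ hy (fun h => hnexy (add_right_cancel h))
    rwa [hd_add_right] at h
  · intro x
    obtain ⟨c, hc, hd⟩ := hP₂perf.2 (x + zhat γ₀)
    refine ⟨c + zhat γ₀, mem_coset_iff.mpr (by rwa [add_assoc, fadd_self, add_zero]), ?_⟩
    have h9 : hammingDist x (c + zhat γ₀) = hammingDist (x + zhat γ₀) (c + zhat γ₀ + zhat γ₀) :=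
      (hd_add_right x (c + zhat γ₀) (zhat γ₀)).symm
    rw [add_assoc, fadd_self, add_zero] at h9
    rw [h9]
    exact hd
  · ext a
    simp only [Set.mem_setOf_eq]
    rw [mem_coset_iff, ← zhat_add]
    have : zhat (a + γ₀) ∈ P₂ ↔ a + γ₀ ∈ C₂ := by
      rw [hP₂eq]
      exact Iff.rfl
    rw [this, hC2mem, add_assoc, fadd_self, add_zero]
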